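/- Let A(x,ẋ) = R(x) + L(x)ᵀ D(x,ẋ) L(x), where R(x) ⪰ 0, L : ℝ^m → ℝ^{n×m} is differentiable, D(x,ẋ) = diag(d_1(x,ẏ_1), …, d_n(x,ẏ_n)) with ẏ = L(x)ẋ, each d_i ≥ 0, and ẏ_i ∂_{ẏ_i} d_i(x,ẏ_i) ≥ 0 for all i. Then the curvature matrix Ξ_A(x,ẋ) = (1/2) Σ_{i=1}^m ẋ_i ∂_{ẋ} a_i(x,ẋ) satisfies Ξ_A(x,ẋ) = L(x)ᵀ Ξ_D(x,ẋ) L(x), where Ξ_D = (1/2)diag(ẏ_i ∂_{ẏ_i} d_i(x,ẏ_i)), and consequently Ξ_A(x,ẋ) ⪰ 0. -/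

import Mathlib

open Matrix

/-- Partial derivative of a scalar function on `ℝ^m` in the `k`-th coordinate direction. -/
noncomputable def pd {m : ℕ} (k : Fin m) (f : (Fin m → ℝ) → ℝ) (x : Fin m → ℝ) : ℝ :=
  fderiv ℝ f x (Pi.single k 1)

/-- `Ξ_A(x,ẋ) = (1/2) Σ_i ẋ_i ∂_ẋ a_i(x,ẋ)` for the velocity-dependent matrix `ẋ ↦ A(ẋ)`. -/
noncomputable def XiMat {m : ℕ} (A : (Fin m → ℝ) → Matrix (Fin m) (Fin m) ℝ)
    (v : Fin m → ℝ) : Matrix (Fin m) (Fin m) ℝ :=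
  fun j k => (1 / 2) * ∑ i, v i * pd k (fun v' => A v' j i) v

lemma pd_entry {m n : ℕ}
    (R : (Fin m → ℝ) → Matrix (Fin m) (Fin m) ℝ)
    (L : (Fin m → ℝ) → Matrix (Fin n) (Fin m) ℝ)
    (d : Fin n → (Fin m → ℝ) → ℝ → ℝ)
    (hd : ∀ i x, Differentiable ℝ (d i x))
    (x v : Fin m → ℝ) (j k : Fin m) (i : Fin m) :
    pd k (fun v' => (R x + (L x)ᵀ *
        Matrix.diagonal (fun p => d p x ((L x).mulVec v' p)) * L x) j i) v
      = ∑ p, L x p j * (deriv (d p x) ((L x).mulVec v p) * L x p k) * L x p i := by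
  set clm : Fin n → ((Fin m → ℝ) →L[ℝ] ℝ) := fun p =>
    LinearMap.toContinuousLinearMap
      ((LinearMap.proj p : ((Fin n → ℝ)) →ₗ[ℝ] ℝ).comp (Matrix.mulVecLin (L x))) with hclm
  have hg : ∀ p, HasFDerivAt (fun v' => (L x).mulVec v' p) (clm p) v := fun p =>
    (clm p).hasFDerivAt
  have h2 : ∀ p, HasFDerivAt (fun v' => d p x ((L x).mulVec v' p))
      (deriv (d p x) ((L x).mulVec v p) • clm p) v := fun p =>
    ((hd p x _).hasDerivAt).comp_hasFDerivAt v (hg p)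
  have h3 : ∀ p, HasFDerivAt (fun v' => L x p j * d p x ((L x).mulVec v' p) * L x p i)
      (L x p i • (L x p j • (deriv (d p x) ((L x).mulVec v p) • clm p))) v := fun p =>
    ((h2 p).const_mul _).mul_const _
  have hF : HasFDerivAt (fun v' => (R x + (L x)ᵀ *
        Matrix.diagonal (fun p => d p x ((L x).mulVec v' p)) * L x) j i)
      (∑ p, L x p i • (L x p j • (deriv (d p x) ((L x).mulVec v p) • clm p))) v := by
    have : (fun v' => (R x + (L x)ᵀ *
        Matrix.diagonal (fun p => d p x ((L x).mulVec v' p)) * L x) j i)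
        = fun v' => R x j i + ∑ p, L x p j * d p x ((L x).mulVec v' p) * L x p i := by
      funext v'
      simp only [Matrix.add_apply, Matrix.mul_apply, Matrix.diagonal_apply, mul_ite, mul_zero,
        ite_mul, zero_mul, Finset.sum_ite_eq', Finset.sum_ite_eq, Finset.mem_univ, if_true,
        Matrix.transpose_apply]
    rw [this]
    exact (HasFDerivAt.fun_sum (fun p _ => h3 p)).const_add _
  rw [pd, hF.fderiv]
  simp only [ContinuousLinearMap.coe_sum', Finset.sum_apply, ContinuousLinearMap.coe_smul',
    Pi.smul_apply, smul_eq_mul]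
  refine Finset.sum_congr rfl fun p _ => ?_
  have : clm p (Pi.single k 1) = L x p k := by
    simp [hclm, Matrix.mulVecLin_apply]
  rw [this]; ring

/-- For `A(x,ẋ) = R(x) + L(x)ᵀ D(x,ẋ) L(x)` with `D = diag(d_i(x, ẏ_i))`, `ẏ = L(x)ẋ`,
`d_i ≥ 0` and `ẏ_i ∂_{ẏ_i} d_i ≥ 0`, the curvature matrix satisfies
`Ξ_A = Lᵀ Ξ_D L` with `Ξ_D = (1/2)diag(ẏ_i ∂_{ẏ_i} d_i)`, and `Ξ_A ⪰ 0`. -/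
theorem Xi_of_structured_metric {m n : ℕ}
    (R : (Fin m → ℝ) → Matrix (Fin m) (Fin m) ℝ)
    (L : (Fin m → ℝ) → Matrix (Fin n) (Fin m) ℝ)
    (d : Fin n → (Fin m → ℝ) → ℝ → ℝ)
    (hR : ∀ x, (R x).PosSemidef)
    (hL : ∀ i j, Differentiable ℝ fun x => L x i j)
    (hd : ∀ i x, Differentiable ℝ (d i x))
    (hd0 : ∀ i x t, 0 ≤ d i x t)
    (hdmono : ∀ i x t, 0 ≤ t * deriv (d i x) t)
    (x v : Fin m → ℝ) :
    XiMat (fun v' => R x + (L x)ᵀ *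
        Matrix.diagonal (fun i => d i x ((L x).mulVec v' i)) * L x) v
      = (L x)ᵀ *
          Matrix.diagonal (fun i =>
            (1 / 2) * ((L x).mulVec v i * deriv (d i x) ((L x).mulVec v i))) * L x
    ∧ (XiMat (fun v' => R x + (L x)ᵀ *
        Matrix.diagonal (fun i => d i x ((L x).mulVec v' i)) * L x) v).PosSemidef := by
  have key : XiMat (fun v' => R x + (L x)ᵀ *
        Matrix.diagonal (fun i => d i x ((L x).mulVec v' i)) * L x) v
      = (L x)ᵀ *
          Matrix.diagonal (fun i =>
            (1 / 2) * ((L x).mulVec v i * deriv (d i x) ((L x).mulVec v i))) * L x := by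
    ext j k
    show (1 / 2 : ℝ) * ∑ i, v i * pd k (fun v' => (R x + (L x)ᵀ *
        Matrix.diagonal (fun p => d p x ((L x).mulVec v' p)) * L x) j i) v = _
    simp only [pd_entry R L d hd x v j k]
    rw [Finset.mul_sum]
    simp only [Finset.mul_sum]
    rw [Finset.sum_comm]
    simp only [Matrix.mul_apply, Matrix.diagonal_apply, mul_ite, mul_zero, ite_mul, zero_mul,
      Finset.sum_ite_eq', Finset.sum_ite_eq, Finset.mem_univ, if_true, Matrix.transpose_apply]
    refine Finset.sum_congr rfl fun p _ => ?_
    have hyp : (L x).mulVec v p = ∑ i, L x p i * v i := by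
      simp [Matrix.mulVec, dotProduct]
    rw [hyp]
    simp only [Finset.mul_sum, Finset.sum_mul]
    refine Finset.sum_congr rfl fun i _ => ?_
    ring
  refine ⟨key, ?_⟩
  rw [key]
  have hdiag : (Matrix.diagonal (fun i =>
      (1 / 2 : ℝ) * ((L x).mulVec v i * deriv (d i x) ((L x).mulVec v i)))).PosSemidef :=
    Matrix.posSemidef_diagonal_iff.mpr fun i =>
      mul_nonneg (by norm_num) (hdmono i x _)
  have h := hdiag.conjTranspose_mul_mul_same (L x)
  rwa [Matrix.conjTranspose_eq_transpose_of_trivial] at h
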